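/- Let k ≥ 2, n ≥ 1, d ≥ 1, α ∈ (0,1], ε₀ ∈ (0, 1/2), Δ > 0, and q ∈ (0,1) with 5/(2α·log(1/q)) < 1/2. Let θ₁, …, θ_k ∈ ℝ^d with min_{g≠h} ‖θ_g − θ_h‖ ≥ Δ, let z : {1,…,n} → {1,…,k} with n_g* := |{i : z_i = g}| ≥ nα for every g, and let Y_i = θ_{z_i} + w_i where w₁, …, w_n are independent ℝ^d-valued random vectors with P[‖w_i‖ ≥ ε₀Δ] ≤ q for each i. Then with probability at least 1 − k·exp(−nα/4), the following holds simultaneously: for every family θ̂₁, …, θ̂_k ∈ ℝ^d with max_h ‖θ̂_h − θ_h‖ ≤ (1/2 − ε₀)Δ and every labeling ẑ : {1,…,n} → {1,…,k} satisfying ‖Y_i − θ̂_{ẑ_i}‖ ≤ ‖Y_i − θ̂_a‖ for all i and all a ∈ {1,…,k}, one has for every g ∈ {1,…,k}, writing n_{gg} := |{i : z_i = g and ẑ_i = g}| and n_g := |{i : ẑ_i = g}|: n_{gg}/n_g* ≥ 1 − 5/(2α·log(1/q)) and n_{gg}/n_g ≥ 1 − 5/(2α·log(1/q)). -/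

import Mathlib

open MeasureTheory ProbabilityTheory Filter Finset
open scoped ENNReal

lemma choose_le_two_pow' (n m : ℕ) : n.choose m ≤ 2 ^ n := by
  rcases le_or_gt m n with h | h
  · calc n.choose m ≤ ∑ i ∈ range (n+1), n.choose i :=
        Finset.single_le_sum (f := fun i => n.choose i) (fun _ _ => Nat.zero_le _)
          (Finset.mem_range.mpr (Nat.lt_succ_of_le h))
      _ = 2 ^ n := Nat.sum_range_choose n
  · rw [Nat.choose_eq_zero_of_lt h]; exact Nat.zero_le _

lemma count_lemma {n k : ℕ} (z zhat : Fin n → Fin k) (g : Fin k) (N c : ℝ)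
    (hN : 0 < N) (hc0 : 0 ≤ c) (hc1 : c < 1)
    (hsz : N ≤ ((univ.filter (fun i => z i = g)).card : ℝ))
    (hM : ((univ.filter (fun i => zhat i ≠ z i)).card : ℝ) ≤ c * N) :
    (1 - c ≤ ((univ.filter (fun i => z i = g ∧ zhat i = g)).card : ℝ)
        / ((univ.filter (fun i => z i = g)).card : ℝ)) ∧
    (1 - c ≤ ((univ.filter (fun i => z i = g ∧ zhat i = g)).card : ℝ)
        / ((univ.filter (fun i => zhat i = g)).card : ℝ)) := by
  set A := univ.filter (fun i => z i = g ∧ zhat i = g) with hA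
  set S := univ.filter (fun i : Fin n => z i = g) with hS
  set T := univ.filter (fun i : Fin n => zhat i = g) with hT
  set M := univ.filter (fun i : Fin n => zhat i ≠ z i) with hMdef
  have hSsub : S ⊆ A ∪ M := by
    intro i hi
    simp only [hS, hA, hMdef, mem_filter, mem_univ, true_and, mem_union] at hi ⊢
    by_cases hz : zhat i = g
    · exact Or.inl ⟨hi, hz⟩
    · exact Or.inr (by rw [hi]; exact hz)
  have hTsub : T ⊆ A ∪ M := by
    intro i hi
    simp only [hS, hA, hMdef, hT, mem_filter, mem_univ, true_and, mem_union] at hi ⊢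
    by_cases hz : z i = g
    · exact Or.inl ⟨hz, hi⟩
    · exact Or.inr (by rw [hi]; exact fun hh => hz hh.symm)
  have h1 : (S.card : ℝ) ≤ A.card + M.card := by
    have := (card_le_card hSsub).trans (card_union_le A M)
    exact_mod_cast this
  have h2 : (T.card : ℝ) ≤ A.card + M.card := by
    have := (card_le_card hTsub).trans (card_union_le A M)
    exact_mod_cast this
  have hAS : (A.card : ℝ) ≤ S.card := by
    exact_mod_cast card_le_card (by intro i hi; simp only [hA, hS, mem_filter] at hi ⊢; exact ⟨hi.1, hi.2.1⟩)
  have hAT : (A.card : ℝ) ≤ T.card := by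
    exact_mod_cast card_le_card (by intro i hi; simp only [hA, hT, mem_filter] at hi ⊢; exact ⟨hi.1, hi.2.2⟩)
  have hSpos : (0:ℝ) < S.card := lt_of_lt_of_le hN hsz
  have hApos : (0:ℝ) < A.card := by nlinarith
  have hTpos : (0:ℝ) < T.card := lt_of_lt_of_le hApos hAT
  constructor
  · rw [le_div_iff₀ hSpos]; nlinarith
  · rw [le_div_iff₀ hTpos]; nlinarith

lemma correct_label {d k : ℕ} {Δ ε₀ : ℝ} (hΔ : 0 < Δ) (hε : ε₀ < 1/2)
    {θ θhat : Fin k → EuclideanSpace ℝ (Fin d)}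
    (hsep : ∀ g h : Fin k, g ≠ h → Δ ≤ ‖θ g - θ h‖)
    (hhat : ∀ h : Fin k, ‖θhat h - θ h‖ ≤ (1/2 - ε₀) * Δ)
    (g b : Fin k) (wv : EuclideanSpace ℝ (Fin d)) (hw : ‖wv‖ < ε₀ * Δ)
    (hb : ‖(θ g + wv) - θhat b‖ ≤ ‖(θ g + wv) - θhat g‖) : b = g := by
  by_contra hne
  have hub : ‖(θ g + wv) - θhat g‖ ≤ ‖wv‖ + ‖θhat g - θ g‖ := by
    have : (θ g + wv) - θhat g = wv + -(θhat g - θ g) := by abel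
    rw [this]
    exact (norm_add_le _ _).trans (by rw [norm_neg])
  have hlb : ‖θ g - θ b‖ ≤ ‖(θ g + wv) - θhat b‖ + ‖wv‖ + ‖θhat b - θ b‖ := by
    have : θ g - θ b = ((θ g + wv) - θhat b) + -wv + (θhat b - θ b) := by abel
    rw [this]
    exact (norm_add_le _ _).trans (by
      have := norm_add_le ((θ g + wv) - θhat b) (-wv)
      rw [norm_neg] at this
      linarith)
  have hsep' := hsep g b (fun h => hne h.symm)
  have h1 := hhat g
  have h2 := hhat b
  linarith

theorem nearest_centroid_labeling_accuracy
    (k n d : ℕ) (hk : 2 ≤ k) (hn : 1 ≤ n) (hd : 1 ≤ d)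
    (α ε₀ Δ q : ℝ) (hα : α ∈ Set.Ioc (0 : ℝ) 1)
    (hε₀ : ε₀ ∈ Set.Ioo (0 : ℝ) (1 / 2)) (hΔ : 0 < Δ)
    (hq : q ∈ Set.Ioo (0 : ℝ) 1)
    (hcond : 5 / (2 * α * Real.log (1 / q)) < 1 / 2)
    (θ : Fin k → EuclideanSpace ℝ (Fin d))
    (hsep : ∀ g h : Fin k, g ≠ h → Δ ≤ ‖θ g - θ h‖)
    (z : Fin n → Fin k)
    (hsize : ∀ g : Fin k,
      (n : ℝ) * α ≤ ((Finset.univ.filter (fun i => z i = g)).card : ℝ))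
    (Ω : Type*) [MeasureSpace Ω] [IsProbabilityMeasure (ℙ : Measure Ω)]
    (w : Fin n → Ω → EuclideanSpace ℝ (Fin d))
    (hmeas : ∀ i, Measurable (w i))
    (hindep : iIndepFun w ℙ)
    (htail : ∀ i, (ℙ {ω | ε₀ * Δ ≤ ‖w i ω‖}).toReal ≤ q) :
    1 - k * Real.exp (-((n : ℝ) * α) / 4)
      ≤ (ℙ {ω | ∀ θhat : Fin k → EuclideanSpace ℝ (Fin d),
            (∀ h : Fin k, ‖θhat h - θ h‖ ≤ (1 / 2 - ε₀) * Δ) →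
            ∀ zhat : Fin n → Fin k,
            (∀ i : Fin n, ∀ a : Fin k,
              ‖(θ (z i) + w i ω) - θhat (zhat i)‖ ≤ ‖(θ (z i) + w i ω) - θhat a‖) →
            ∀ g : Fin k,
              (1 - 5 / (2 * α * Real.log (1 / q))
                ≤ ((Finset.univ.filter (fun i => z i = g ∧ zhat i = g)).card : ℝ)
                  / ((Finset.univ.filter (fun i => z i = g)).card : ℝ)) ∧
              (1 - 5 / (2 * α * Real.log (1 / q))
                ≤ ((Finset.univ.filter (fun i => z i = g ∧ zhat i = g)).card : ℝ)
                  / ((Finset.univ.filter (fun i => zhat i = g)).card : ℝ))}).toReal := by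
  obtain ⟨hα0, hα1⟩ := hα
  obtain ⟨hε0, hεhalf⟩ := hε₀
  obtain ⟨hq0, hq1⟩ := hq
  -- basic quantities
  set L : ℝ := Real.log (1 / q) with hL
  have hLpos : 0 < L := Real.log_pos (by rw [lt_div_iff₀ hq0]; linarith)
  set c : ℝ := 5 / (2 * α * L) with hc
  have hc0 : 0 ≤ c := by positivity
  have hc1 : c < 1 := lt_trans hcond (by norm_num)
  set t : ℝ := c * ((n : ℝ) * α) with ht
  have ht0 : 0 ≤ t := by positivity
  set m : ℕ := Nat.floor t + 1 with hm
  have htm : t < m := by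
    have := Nat.lt_floor_add_one t
    exact_mod_cast this
  -- the bad events
  set A : Fin n → Set Ω := fun i => {ω | ε₀ * Δ ≤ ‖w i ω‖} with hAdef
  have hAmeas : ∀ i, MeasurableSet (A i) := by
    intro i
    exact (measurableSet_le measurable_const (hmeas i).norm)
  set B : Set Ω := ⋃ S ∈ univ.powersetCard m, ⋂ i ∈ S, A i with hB
  have hBmeas : MeasurableSet B := by
    apply MeasurableSet.biUnion (Set.to_countable _)
    intro S _
    exact MeasurableSet.biInter (Set.to_countable _) (fun i _ => hAmeas i)
  -- complement of B is contained in the goal event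
  have hsub : Bᶜ ⊆ {ω | ∀ θhat : Fin k → EuclideanSpace ℝ (Fin d),
            (∀ h : Fin k, ‖θhat h - θ h‖ ≤ (1 / 2 - ε₀) * Δ) →
            ∀ zhat : Fin n → Fin k,
            (∀ i : Fin n, ∀ a : Fin k,
              ‖(θ (z i) + w i ω) - θhat (zhat i)‖ ≤ ‖(θ (z i) + w i ω) - θhat a‖) →
            ∀ g : Fin k,
              (1 - c
                ≤ ((Finset.univ.filter (fun i => z i = g ∧ zhat i = g)).card : ℝ)
                  / ((Finset.univ.filter (fun i => z i = g)).card : ℝ)) ∧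
              (1 - c
                ≤ ((Finset.univ.filter (fun i => z i = g ∧ zhat i = g)).card : ℝ)
                  / ((Finset.univ.filter (fun i => zhat i = g)).card : ℝ))} := by
    intro ω hω
    -- few errors
    have hfew : ((univ.filter (fun i => ε₀ * Δ ≤ ‖w i ω‖)).card : ℝ) ≤ t := by
      by_contra hcon
      push_neg at hcon
      have hcard : m ≤ (univ.filter (fun i => ε₀ * Δ ≤ ‖w i ω‖)).card := by
        have : t < ((univ.filter (fun i => ε₀ * Δ ≤ ‖w i ω‖)).card : ℝ) := hcon
        have h2 : Nat.floor t < (univ.filter (fun i => ε₀ * Δ ≤ ‖w i ω‖)).card :=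
          (Nat.floor_lt ht0).mpr this
        omega
      obtain ⟨S, hSsub, hScard⟩ := Finset.exists_subset_card_eq hcard
      apply hω
      rw [hB]
      refine Set.mem_biUnion (Finset.mem_powersetCard.mpr ⟨Finset.subset_univ _, hScard⟩) ?_
      refine Set.mem_biInter ?_
      intro i hi
      have := hSsub hi
      simp only [mem_filter] at this
      exact this.2
    intro θhat hhat zhat hnear g
    -- mismatches are errors
    have hmsub : (univ.filter (fun i => zhat i ≠ z i)) ⊆
        (univ.filter (fun i => ε₀ * Δ ≤ ‖w i ω‖)) := by
      intro i hi
      simp only [mem_filter, mem_univ, true_and] at hi ⊢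
      by_contra hcon
      push_neg at hcon
      exact hi (correct_label hΔ hεhalf hsep hhat (z i) (zhat i) (w i ω) hcon
        (hnear i (z i)))
    have hMle : ((univ.filter (fun i => zhat i ≠ z i)).card : ℝ) ≤ c * ((n:ℝ) * α) := by
      calc ((univ.filter (fun i => zhat i ≠ z i)).card : ℝ)
          ≤ ((univ.filter (fun i => ε₀ * Δ ≤ ‖w i ω‖)).card : ℝ) := by
            exact_mod_cast card_le_card hmsub
        _ ≤ t := hfew
        _ = c * ((n:ℝ) * α) := ht
    have hNpos : (0:ℝ) < (n:ℝ) * α := by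
      have : (0:ℝ) < (n:ℝ) := by exact_mod_cast hn
      positivity
    exact count_lemma z zhat g ((n:ℝ)*α) c hNpos hc0 hc1 (hsize g) hMle
  -- probability bound for B
  have hPB : ℙ B ≤ ENNReal.ofReal ((k:ℝ) * Real.exp (-((n : ℝ) * α) / 4)) := by
    have step1 : ℙ B ≤ ∑ S ∈ univ.powersetCard m, ℙ (⋂ i ∈ S, A i) :=
      measure_biUnion_finset_le _ _
    have step2 : ∀ S ∈ univ.powersetCard m, ℙ (⋂ i ∈ S, A i) ≤ ENNReal.ofReal q ^ m := by
      intro S hS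
      have hcardS : S.card = m := (Finset.mem_powersetCard.mp hS).2
      have heq : ℙ (⋂ i ∈ S, A i) = ∏ i ∈ S, ℙ (A i) := by
        refine hindep.meas_biInter (fun i _ => ?_)
        exact ⟨{x | ε₀ * Δ ≤ ‖x‖}, measurableSet_le measurable_const measurable_norm, rfl⟩
      rw [heq, ← hcardS]
      rw [← Finset.prod_const]
      refine Finset.prod_le_prod' (fun i _ => ?_)
      exact (ENNReal.le_ofReal_iff_toReal_le (measure_ne_top _ _) hq0.le).mpr (htail i)
    have step3 : ℙ B ≤ (n.choose m : ℝ≥0∞) * ENNReal.ofReal q ^ m := by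
      calc ℙ B ≤ ∑ S ∈ univ.powersetCard m, ℙ (⋂ i ∈ S, A i) := step1
        _ ≤ ∑ _S ∈ univ.powersetCard m, ENNReal.ofReal q ^ m :=
            Finset.sum_le_sum step2
        _ = ((univ.powersetCard m).card : ℝ≥0∞) * ENNReal.ofReal q ^ m := by
            rw [Finset.sum_const, nsmul_eq_mul]
        _ = (n.choose m : ℝ≥0∞) * ENNReal.ofReal q ^ m := by
            rw [Finset.card_powersetCard, Finset.card_univ, Fintype.card_fin]
    have hreal : (2:ℝ)^n * q^m ≤ (k:ℝ) * Real.exp (-((n : ℝ) * α) / 4) := by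
      have hLq : L = - Real.log q := by
        rw [hL, Real.log_div one_ne_zero (ne_of_gt hq0), Real.log_one]; ring
      have hqm : q ^ m = Real.exp (-((m:ℝ) * L)) := by
        have h' : Real.exp ((m:ℝ) * Real.log q) = q ^ m := by
          rw [← Real.log_pow, Real.exp_log (pow_pos hq0 m)]
        rw [← h', hLq]; ring_nf
      have h2n : (2:ℝ)^n = Real.exp ((n:ℝ) * Real.log 2) := by
        have h' : Real.exp ((n:ℝ) * Real.log 2) = (2:ℝ) ^ n := by
          rw [← Real.log_pow, Real.exp_log (pow_pos (by norm_num) n)]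
        rw [h']
      have htL : t * L = 5 * n / 2 := by
        rw [ht, hc]
        field_simp
      have hmL : 5 * n / 2 ≤ m * L := by
        rw [← htL]
        exact mul_le_mul_of_nonneg_right htm.le hLpos.le
      have hlog2 : Real.log 2 < 0.6931471808 := Real.log_two_lt_d9
      have hexp : Real.exp ((n:ℝ) * Real.log 2 + -(m * L)) ≤ Real.exp (-((n : ℝ) * α) / 4) := by
        apply Real.exp_le_exp.mpr
        have hn1 : (1:ℝ) ≤ (n:ℝ) := by exact_mod_cast hn
        have hn0 : (0:ℝ) ≤ (n:ℝ) := by linarith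
        nlinarith [mul_le_mul_of_nonneg_left hα1 hn0, mul_le_mul_of_nonneg_left hlog2.le hn0]
      have hk1 : (1:ℝ) ≤ (k:ℝ) := by
        have : (2:ℝ) ≤ (k:ℝ) := by exact_mod_cast hk
        linarith
      calc (2:ℝ)^n * q^m = Real.exp ((n:ℝ) * Real.log 2 + -(m * L)) := by
            rw [h2n, hqm, ← Real.exp_add]
        _ ≤ Real.exp (-((n : ℝ) * α) / 4) := hexp
        _ ≤ (k:ℝ) * Real.exp (-((n : ℝ) * α) / 4) :=
            le_mul_of_one_le_left (Real.exp_pos _).le hk1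
    calc ℙ B ≤ (n.choose m : ℝ≥0∞) * ENNReal.ofReal q ^ m := step3
      _ ≤ ENNReal.ofReal ((2:ℝ)^n) * ENNReal.ofReal (q^m) := by
          apply mul_le_mul'
          · rw [show ((2:ℝ)^n) = ((2^n : ℕ) : ℝ) by push_cast; ring, ENNReal.ofReal_natCast]
            exact_mod_cast choose_le_two_pow' n m
          · rw [ENNReal.ofReal_pow hq0.le]
      _ = ENNReal.ofReal ((2:ℝ)^n * q^m) := by
          rw [← ENNReal.ofReal_mul (by positivity)]
      _ ≤ ENNReal.ofReal ((k:ℝ) * Real.exp (-((n : ℝ) * α) / 4)) :=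
          ENNReal.ofReal_le_ofReal hreal
  -- put it together
  have hcompl : (ℙ Bᶜ).toReal = 1 - (ℙ B).toReal := by
    rw [prob_compl_eq_one_sub hBmeas, ENNReal.toReal_sub_of_le prob_le_one (by norm_num)]
    norm_num
  have hPBreal : (ℙ B).toReal ≤ (k:ℝ) * Real.exp (-((n : ℝ) * α) / 4) :=
    ENNReal.toReal_le_of_le_ofReal (by positivity) hPB
  have hmono : (ℙ Bᶜ).toReal ≤ (ℙ _).toReal :=
    ENNReal.toReal_mono (measure_ne_top _ _) (measure_mono hsub)
  calc 1 - (k:ℝ) * Real.exp (-((n : ℝ) * α) / 4)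
      ≤ 1 - (ℙ B).toReal := by linarith
    _ = (ℙ Bᶜ).toReal := hcompl.symm
    _ ≤ _ := hmono
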